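/- Let A be a real symmetric n×n matrix (not necessarily nonsingular), M a real symmetric invertible n×n matrix, N := M − A, H := M⁻¹N, and for ℓ ≥ 1 let C^(ℓ) := ∑_{i=0}^{ℓ−1} Hⁱ M⁻¹. If ℓ is odd, then C^(ℓ) is positive definite if and only if M is positive definite, and C^(ℓ) is negative definite if and only if M is negative definite. -/

import Mathlib

open Matrix

/-- A real symmetric matrix is positive definite: `vᵀPv > 0` for all nonzero `v`. -/
def Matrix.IsPD {n : ℕ} (P : Matrix (Fin n) (Fin n) ℝ) : Prop :=
  Pᵀ = P ∧ ∀ v : Fin n → ℝ, v ≠ 0 → 0 < v ⬝ᵥ (P *ᵥ v)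

/-- A real symmetric matrix is negative definite: `vᵀPv < 0` for all nonzero `v`. -/
def Matrix.IsND {n : ℕ} (P : Matrix (Fin n) (Fin n) ℝ) : Prop :=
  Pᵀ = P ∧ ∀ v : Fin n → ℝ, v ≠ 0 → v ⬝ᵥ (P *ᵥ v) < 0

section Aux

open scoped MatrixOrder

variable {n : ℕ}

lemma isPD_iff_posDef (P : Matrix (Fin n) (Fin n) ℝ) : P.IsPD ↔ P.PosDef := by
  rw [posDef_iff_dotProduct_mulVec]
  constructor
  · rintro ⟨h1, h2⟩
    refine ⟨?_, fun x hx => by simpa using h2 x hx⟩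
    show Pᴴ = P
    rwa [conjTranspose_eq_transpose_of_trivial]
  · rintro ⟨h1, h2⟩
    have h1' : Pᴴ = P := h1
    rw [conjTranspose_eq_transpose_of_trivial] at h1'
    exact ⟨h1', fun x hx => by simpa using h2 hx⟩

lemma isND_iff_posDef_neg (P : Matrix (Fin n) (Fin n) ℝ) : P.IsND ↔ (-P).PosDef := by
  rw [posDef_iff_dotProduct_mulVec]
  constructor
  · rintro ⟨h1, h2⟩
    refine ⟨?_, fun x hx => ?_⟩
    · show (-P)ᴴ = -P
      rw [conjTranspose_eq_transpose_of_trivial, transpose_neg, h1]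
    · have := h2 x hx
      simp only [star_trivial, neg_mulVec, dotProduct_neg]
      linarith
  · rintro ⟨h1, h2⟩
    have h1' : (-P)ᴴ = -P := h1
    rw [conjTranspose_eq_transpose_of_trivial, transpose_neg, neg_inj] at h1'
    refine ⟨h1', fun x hx => ?_⟩
    have := h2 hx
    simp only [star_trivial, neg_mulVec, dotProduct_neg] at this
    linarith

lemma cancel_rightR {R X Y : Matrix (Fin n) (Fin n) ℝ} (hR : R * R⁻¹ = 1)
    (h : X * R = Y * R) : X = Y := by
  have := congrArg (fun Z => Z * R⁻¹) h
  simpa only [mul_assoc, hR, mul_one] using this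

/-- Congruence by an invertible matrix preserves positive definiteness (real case). -/
lemma posDef_conj {Q : Matrix (Fin n) (Fin n) ℝ} (hQ : Q.PosDef)
    (B : Matrix (Fin n) (Fin n) ℝ) (hB : IsUnit B) : (B * Q * Bᵀ).PosDef := by
  have hBT : IsUnit Bᵀ := by
    rw [Matrix.isUnit_iff_isUnit_det] at hB ⊢
    rwa [det_transpose]
  have hQsym : Qᵀ = Q := by
    have h := hQ.isHermitian
    have h' : Qᴴ = Q := h
    rwa [conjTranspose_eq_transpose_of_trivial] at h'
  rw [posDef_iff_dotProduct_mulVec]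
  constructor
  · show (B * Q * Bᵀ)ᴴ = B * Q * Bᵀ
    rw [conjTranspose_eq_transpose_of_trivial, transpose_mul, transpose_mul,
      transpose_transpose, hQsym, mul_assoc]
  · intro x hx
    have hxB : Bᵀ *ᵥ x ≠ 0 := fun h =>
      hx ((Matrix.mulVec_injective_iff_isUnit.mpr hBT) (by rw [h, Matrix.mulVec_zero]))
    have key : star x ⬝ᵥ ((B * Q * Bᵀ) *ᵥ x) = star (Bᵀ *ᵥ x) ⬝ᵥ (Q *ᵥ (Bᵀ *ᵥ x)) := by
      simp only [star_trivial]
      rw [← mulVec_mulVec, ← mulVec_mulVec, dotProduct_mulVec, ← Matrix.mulVec_transpose]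
    rw [key]
    exact hQ.dotProduct_mulVec_pos hxB

/-- For `K` real symmetric and `ℓ` odd, `∑_{i<ℓ} Kⁱ` is positive definite. -/
lemma geomSum_posDef {K : Matrix (Fin n) (Fin n) ℝ} (hK : K.IsHermitian)
    {ℓ : ℕ} (hodd : Odd ℓ) : (∑ i ∈ Finset.range ℓ, K ^ i).PosDef := by
  set U : Matrix (Fin n) (Fin n) ℝ := (hK.eigenvectorUnitary : Matrix (Fin n) (Fin n) ℝ)
    with hUdef
  set d : Fin n → ℝ := RCLike.ofReal ∘ hK.eigenvalues with hddef
  have hmem : U ∈ Matrix.unitaryGroup (Fin n) ℝ := (hK.eigenvectorUnitary).2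
  have hUU : U * star U = 1 := (Matrix.mem_unitaryGroup_iff).mp hmem
  have hUU' : star U * U = 1 := (Matrix.mem_unitaryGroup_iff').mp hmem
  have spec : K = U * diagonal d * star U := hK.spectral_theorem
  have hpow : ∀ i : ℕ, K ^ i = U * (diagonal d) ^ i * star U := by
    intro i
    induction i with
    | zero => simp [hUU]
    | succ i ih =>
      rw [pow_succ, ih, spec, pow_succ]
      simp only [mul_assoc]
      rw [← mul_assoc (star U) U, hUU', one_mul]
  have hsum : (∑ i ∈ Finset.range ℓ, K ^ i)
      = U * (diagonal fun j => ∑ i ∈ Finset.range ℓ, d j ^ i) * star U := by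
    have hd : (∑ i ∈ Finset.range ℓ, (diagonal d) ^ i)
        = diagonal fun j => ∑ i ∈ Finset.range ℓ, d j ^ i := by
      simp_rw [diagonal_pow]
      ext a b
      by_cases h : a = b
      · subst h; simp [Matrix.sum_apply]
      · simp [Matrix.sum_apply, Matrix.diagonal_apply_ne _ h]
    rw [← hd, Finset.mul_sum, Finset.sum_mul]
    exact Finset.sum_congr rfl fun i _ => hpow i
  rw [hsum]
  have hdiag : (diagonal fun j => ∑ i ∈ Finset.range ℓ, d j ^ i).PosDef :=
    Matrix.PosDef.diagonal fun j => hodd.geom_sum_pos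
  have hUunit : IsUnit U := (Matrix.isUnit_iff_isUnit_det U).mpr
    (IsUnit.of_mul_eq_one _ (by rw [← det_mul, hUU, det_one]))
  have h := posDef_conj hdiag U hUunit
  rwa [← conjTranspose_eq_transpose_of_trivial, ← star_eq_conjTranspose] at h

/-- Core lemma: if `W` is PD and `W*H = Hᵀ*W`, then `∑_{i<ℓ} Hⁱ = R⁻¹ Q R` with
`W = R*R`, `R` symmetric invertible, and `Q` PD (for `ℓ` odd). -/
lemma core_lemma {W H : Matrix (Fin n) (Fin n) ℝ} (hW : W.PosDef)
    (hcomm : W * H = Hᵀ * W) {ℓ : ℕ} (hodd : Odd ℓ) :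
    ∃ R Q : Matrix (Fin n) (Fin n) ℝ, Rᵀ = R ∧ IsUnit R ∧ W = R * R ∧ Q.PosDef ∧
      (∑ i ∈ Finset.range ℓ, H ^ i) = R⁻¹ * Q * R := by
  obtain ⟨R, hRT, hRR⟩ : ∃ R : Matrix (Fin n) (Fin n) ℝ, Rᵀ = R ∧ R * R = W := by
    refine ⟨CFC.sqrt W, ?_, CFC.sqrt_mul_sqrt_self W hW.posSemidef.nonneg⟩
    have h : (CFC.sqrt W)ᴴ = CFC.sqrt W := (CFC.sqrt_nonneg W).posSemidef.1
    rwa [conjTranspose_eq_transpose_of_trivial] at h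
  have hRunit : IsUnit R := by
    rw [Matrix.isUnit_iff_isUnit_det]
    have hWdet : IsUnit W.det := (Matrix.isUnit_iff_isUnit_det W).mp hW.isUnit
    rw [← hRR, det_mul] at hWdet
    exact isUnit_of_mul_isUnit_left hWdet
  have hRdet : IsUnit R.det := (Matrix.isUnit_iff_isUnit_det R).mp hRunit
  have hRinv : R * R⁻¹ = 1 := Matrix.mul_nonsing_inv R hRdet
  have hRinv' : R⁻¹ * R = 1 := Matrix.nonsing_inv_mul R hRdet
  have hRinvT : (R⁻¹)ᵀ = R⁻¹ := by rw [Matrix.transpose_nonsing_inv, hRT]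
  have h1 : Hᵀ * (R * R) = (R * R) * H := by rw [hRR, ← hcomm]
  set K : Matrix (Fin n) (Fin n) ℝ := R * H * R⁻¹ with hKdef
  have hKsym : Kᵀ = K := by
    have ht : Kᵀ = R⁻¹ * (Hᵀ * R) := by
      rw [hKdef, transpose_mul, transpose_mul, hRinvT, hRT]
    rw [ht]
    apply cancel_rightR hRinv
    calc R⁻¹ * (Hᵀ * R) * R = R⁻¹ * (Hᵀ * (R * R)) := by simp only [mul_assoc]
      _ = R⁻¹ * ((R * R) * H) := by rw [h1]
      _ = (R⁻¹ * R) * (R * H) := by simp only [mul_assoc]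
      _ = R * H := by rw [hRinv', one_mul]
      _ = K * R := by
          rw [hKdef]
          simp only [mul_assoc]
          rw [hRinv', mul_one]
  have hpow : ∀ i : ℕ, K ^ i = R * H ^ i * R⁻¹ := by
    intro i
    induction i with
    | zero => simp [hRinv]
    | succ i ih =>
      rw [pow_succ, ih, hKdef, pow_succ]
      simp only [mul_assoc]
      rw [← mul_assoc R⁻¹ R, hRinv', one_mul]
  have hsumK : (∑ i ∈ Finset.range ℓ, K ^ i) = R * (∑ i ∈ Finset.range ℓ, H ^ i) * R⁻¹ := by
    rw [Finset.mul_sum, Finset.sum_mul]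
    exact Finset.sum_congr rfl fun i _ => hpow i
  have hKherm : K.IsHermitian := by
    show Kᴴ = K
    rwa [conjTranspose_eq_transpose_of_trivial]
  refine ⟨R, ∑ i ∈ Finset.range ℓ, K ^ i, hRT, hRunit, hRR.symm, geomSum_posDef hKherm hodd, ?_⟩
  rw [hsumK]
  simp only [mul_assoc]
  rw [hRinv', mul_one, ← mul_assoc, hRinv', one_mul]

end Aux

theorem stmt_6 {n : ℕ} (A M : Matrix (Fin n) (Fin n) ℝ)
    (hA : Aᵀ = A) (hM : Mᵀ = M) (hMinv : IsUnit M)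
    (ℓ : ℕ) (hodd : Odd ℓ) (hℓ : 1 ≤ ℓ) :
    (((∑ i ∈ Finset.range ℓ, (M⁻¹ * (M - A)) ^ i) * M⁻¹).IsPD ↔ M.IsPD) ∧
    (((∑ i ∈ Finset.range ℓ, (M⁻¹ * (M - A)) ^ i) * M⁻¹).IsND ↔ M.IsND) := by
  have hMdet : IsUnit M.det := (Matrix.isUnit_iff_isUnit_det M).mp hMinv
  have hMM : M * M⁻¹ = 1 := Matrix.mul_nonsing_inv M hMdet
  have hMM' : M⁻¹ * M = 1 := Matrix.nonsing_inv_mul M hMdet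
  have hMinvT : (M⁻¹)ᵀ = M⁻¹ := by rw [Matrix.transpose_nonsing_inv, hM]
  set H : Matrix (Fin n) (Fin n) ℝ := M⁻¹ * (M - A) with hHdef
  set S : Matrix (Fin n) (Fin n) ℝ := ∑ i ∈ Finset.range ℓ, H ^ i with hSdef
  have hcommM : M * H = Hᵀ * M := by
    have h1 : M * H = M - A := by
      rw [hHdef, ← mul_assoc, hMM, one_mul]
    have h2 : Hᵀ = (M - A) * M⁻¹ := by
      rw [hHdef, transpose_mul, hMinvT, transpose_sub, hM, hA]
    rw [h1, h2, mul_assoc, hMM', mul_one]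
  have hSH : S * H = H * S := by
    rw [hSdef, Finset.sum_mul, Finset.mul_sum]
    exact Finset.sum_congr rfl fun i _ => pow_mul_comm' H i
  have hCM : (S * M⁻¹) * M = S := by rw [mul_assoc, hMM', mul_one]
  constructor
  · -- PD case
    rw [isPD_iff_posDef, isPD_iff_posDef]
    constructor
    · -- C PD → M PD
      intro hC
      have hW : (M * (S * M⁻¹) * Mᵀ).PosDef := posDef_conj hC M hMinv
      rw [hM] at hW
      have hWS : M * (S * M⁻¹) * M = M * S := by rw [mul_assoc, hCM]
      rw [hWS] at hW
      have hcomm : (M * S) * H = Hᵀ * (M * S) := by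
        rw [mul_assoc, hSH, ← mul_assoc, hcommM, mul_assoc]
      obtain ⟨R, Q, hRT, hRunit, hRR, hQ, hSRQ⟩ := core_lemma hW hcomm hodd
      have hQdet : IsUnit Q.det := (Matrix.isUnit_iff_isUnit_det Q).mp hQ.isUnit
      have hRdet : IsUnit R.det := (Matrix.isUnit_iff_isUnit_det R).mp hRunit
      have hRinv : R * R⁻¹ = 1 := Matrix.mul_nonsing_inv R hRdet
      have hRinv' : R⁻¹ * R = 1 := Matrix.nonsing_inv_mul R hRdet
      have hQinv : Q * Q⁻¹ = 1 := Matrix.mul_nonsing_inv Q hQdet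
      have hSinv : S * (R⁻¹ * Q⁻¹ * R) = 1 := by
        rw [← hSdef] at hSRQ
        rw [hSRQ]
        simp only [mul_assoc]
        rw [← mul_assoc R R⁻¹, hRinv, one_mul, ← mul_assoc Q Q⁻¹, hQinv, one_mul, hRinv']
      have hMeq : M = R * Q⁻¹ * R := by
        calc M = M * (S * (R⁻¹ * Q⁻¹ * R)) := by rw [hSinv, mul_one]
          _ = (M * S) * (R⁻¹ * Q⁻¹ * R) := (mul_assoc M S _).symm
          _ = (R * R) * (R⁻¹ * Q⁻¹ * R) := by rw [← hRR]
          _ = R * Q⁻¹ * R := by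
              simp only [mul_assoc]
              rw [← mul_assoc R R⁻¹, hRinv, one_mul]
      have h := posDef_conj hQ.inv R hRunit
      rw [hRT] at h
      rwa [hMeq]
    · -- M PD → C PD
      intro hMpd
      obtain ⟨R, Q, hRT, hRunit, hRR, hQ, hSRQ⟩ := core_lemma hMpd hcommM hodd
      rw [← hSdef] at hSRQ
      have hRdet : IsUnit R.det := (Matrix.isUnit_iff_isUnit_det R).mp hRunit
      have hRinv : R * R⁻¹ = 1 := Matrix.mul_nonsing_inv R hRdet
      have hMinveq : M⁻¹ = R⁻¹ * R⁻¹ := by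
        apply Matrix.inv_eq_right_inv
        rw [hRR, mul_assoc R, ← mul_assoc R R⁻¹, hRinv, one_mul, hRinv]
      have hCeq : S * M⁻¹ = R⁻¹ * Q * (R⁻¹)ᵀ := by
        rw [hSRQ, hMinveq, Matrix.transpose_nonsing_inv, hRT]
        simp only [mul_assoc]
        rw [← mul_assoc R R⁻¹, hRinv, one_mul]
      rw [hCeq]
      exact posDef_conj hQ R⁻¹ (Matrix.isUnit_nonsing_inv_iff.mpr hRunit)
  · -- ND case
    rw [isND_iff_posDef_neg, isND_iff_posDef_neg]
    constructor
    · -- C ND → M ND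
      intro hC
      have hW : (M * (-(S * M⁻¹)) * Mᵀ).PosDef := posDef_conj hC M hMinv
      rw [hM] at hW
      have hWS : M * (-(S * M⁻¹)) * M = -(M * S) := by
        rw [mul_neg, neg_mul, mul_assoc, hCM]
      rw [hWS] at hW
      have hcomm : (-(M * S)) * H = Hᵀ * (-(M * S)) := by
        rw [neg_mul, mul_neg, neg_inj, mul_assoc, hSH, ← mul_assoc, hcommM, mul_assoc]
      obtain ⟨R, Q, hRT, hRunit, hRR, hQ, hSRQ⟩ := core_lemma hW hcomm hodd
      rw [← hSdef] at hSRQ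
      have hQdet : IsUnit Q.det := (Matrix.isUnit_iff_isUnit_det Q).mp hQ.isUnit
      have hRdet : IsUnit R.det := (Matrix.isUnit_iff_isUnit_det R).mp hRunit
      have hRinv : R * R⁻¹ = 1 := Matrix.mul_nonsing_inv R hRdet
      have hRinv' : R⁻¹ * R = 1 := Matrix.nonsing_inv_mul R hRdet
      have hQinv : Q * Q⁻¹ = 1 := Matrix.mul_nonsing_inv Q hQdet
      have hSinv : S * (R⁻¹ * Q⁻¹ * R) = 1 := by
        rw [hSRQ]
        simp only [mul_assoc]
        rw [← mul_assoc R R⁻¹, hRinv, one_mul, ← mul_assoc Q Q⁻¹, hQinv, one_mul, hRinv']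
      have hMeq : -M = R * Q⁻¹ * R := by
        calc -M = -(M * (S * (R⁻¹ * Q⁻¹ * R))) := by rw [hSinv, mul_one]
          _ = -((M * S) * (R⁻¹ * Q⁻¹ * R)) := by rw [← mul_assoc]
          _ = (R * R) * (R⁻¹ * Q⁻¹ * R) := by
              have h' : M * S = -(R * R) := by
                rw [neg_eq_iff_eq_neg] at hRR
                exact hRR
              rw [h', neg_mul, neg_neg]
          _ = R * Q⁻¹ * R := by
              simp only [mul_assoc]
              rw [← mul_assoc R R⁻¹, hRinv, one_mul]
      have h := posDef_conj hQ.inv R hRunit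
      rw [hRT] at h
      rwa [hMeq]
    · -- M ND → C ND
      intro hMnd
      have hcomm : (-M) * H = Hᵀ * (-M) := by rw [neg_mul, mul_neg, hcommM]
      obtain ⟨R, Q, hRT, hRunit, hRR, hQ, hSRQ⟩ := core_lemma hMnd hcomm hodd
      rw [← hSdef] at hSRQ
      have hRdet : IsUnit R.det := (Matrix.isUnit_iff_isUnit_det R).mp hRunit
      have hRinv : R * R⁻¹ = 1 := Matrix.mul_nonsing_inv R hRdet
      have hMinveq : M⁻¹ = -(R⁻¹ * R⁻¹) := by
        apply Matrix.inv_eq_right_inv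
        have hMeq : M = -(R * R) := by
          rw [neg_eq_iff_eq_neg] at hRR
          exact hRR
        rw [hMeq, neg_mul_neg, mul_assoc R, ← mul_assoc R R⁻¹, hRinv, one_mul, hRinv]
      have hCeq : -(S * M⁻¹) = R⁻¹ * Q * (R⁻¹)ᵀ := by
        rw [hSRQ, hMinveq, Matrix.transpose_nonsing_inv, hRT, mul_neg, neg_neg]
        simp only [mul_assoc]
        rw [← mul_assoc R R⁻¹, hRinv, one_mul]
      rw [hCeq]
      exact posDef_conj hQ R⁻¹ (Matrix.isUnit_nonsing_inv_iff.mpr hRunit)
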